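/- Let (U_1 | ⋯ | U_p) be an ordered partition of [m] and I ⊆ [m]. Then F(U_1 | ⋯ | U_p) ∩ D_I ≠ ∅ if and only if I ⊆ U_j for some j ∈ {1, …, p}. -/
import Mathlib

/-- The vertex of the permutohedron corresponding to a permutation `σ` of `[m]`:
the point `(σ(1), …, σ(m))` (in 0-based coordinates, `i ↦ σ(i) + 1`). -/
def permVertex (m : ℕ) (σ : Equiv.Perm (Fin m)) : Fin m → ℝ :=
  fun i => ((σ i : ℕ) : ℝ) + 1

/-- The permutohedron `Perm^{m-1} ⊂ ℝ^m`: the convex hull of the points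
`(σ(1), …, σ(m))` over all permutations `σ` of `[m]`. -/
def permutohedron (m : ℕ) : Set (Fin m → ℝ) :=
  convexHull ℝ {x | ∃ σ : Equiv.Perm (Fin m), x = permVertex m σ}

/-- An ordered partition `(U_1 | ⋯ | U_p)` of `[m]`: a tuple (list) of pairwise
disjoint nonempty subsets of `[m]` whose union is `[m]`. -/
def IsOrderedPartition (m : ℕ) (L : List (Finset (Fin m))) : Prop :=
  (∀ U ∈ L, U.Nonempty) ∧ L.Pairwise Disjoint ∧ L.foldr (· ∪ ·) ∅ = Finset.univ

/-- `|U_1| + ⋯ + |U_j|`, the sum of the cardinalities of the first `j` parts. -/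
def partialCard (m : ℕ) (L : List (Finset (Fin m))) (j : ℕ) : ℕ :=
  ((L.take j).map Finset.card).sum

/-- A permutation `σ` is compatible with the ordered partition `(U_1 | ⋯ | U_p)` if
for every `j` it maps `U_j` bijectively onto
`{|U_1| + ⋯ + |U_{j-1}| + 1, …, |U_1| + ⋯ + |U_j|}` (here in 0-based form). -/
def Compatible (m : ℕ) (L : List (Finset (Fin m))) (σ : Equiv.Perm (Fin m)) : Prop :=
  ∀ j : Fin L.length, ∀ i : Fin m,
    i ∈ L.get j ↔ partialCard m L j ≤ (σ i : ℕ) ∧ (σ i : ℕ) < partialCard m L (j + 1)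

/-- The face `F(U_1 | ⋯ | U_p)` of the permutohedron: the convex hull of the vertices
corresponding to permutations compatible with the ordered partition. -/
def permFace (m : ℕ) (L : List (Finset (Fin m))) : Set (Fin m → ℝ) :=
  convexHull ℝ {x | ∃ σ : Equiv.Perm (Fin m), Compatible m L σ ∧ x = permVertex m σ}

/-- The diagonal subspace `D_I = {x : x_i = x_j for all i, j ∈ I}`. -/
def diagSubspace (m : ℕ) (I : Finset (Fin m)) : Set (Fin m → ℝ) :=
  {x | ∀ i ∈ I, ∀ j ∈ I, x i = x j}

/- ### Auxiliary lemmas -/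

lemma mem_foldr_union {m : ℕ} {L : List (Finset (Fin m))} {x : Fin m} :
    x ∈ L.foldr (· ∪ ·) ∅ ↔ ∃ U ∈ L, x ∈ U := by
  induction L with
  | nil => simp
  | cons U T ih => simp [ih]

lemma sum_card_eq {m : ℕ} {L : List (Finset (Fin m))} (hd : L.Pairwise Disjoint) :
    (L.map Finset.card).sum = (L.foldr (· ∪ ·) ∅).card := by
  induction L with
  | nil => simp
  | cons U T ih =>
    have hdis : Disjoint U (T.foldr (· ∪ ·) ∅) := by
      rw [Finset.disjoint_left]
      intro a ha hmem
      rw [mem_foldr_union] at hmem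
      obtain ⟨V, hV, haV⟩ := hmem
      exact (Finset.disjoint_left.mp (List.rel_of_pairwise_cons hd hV) ha) haV
    simp [Finset.card_union_of_disjoint hdis, ih hd.of_cons]

lemma partialCard_zero {m : ℕ} (L : List (Finset (Fin m))) : partialCard m L 0 = 0 := rfl

lemma partialCard_cons_succ {m : ℕ} (U : Finset (Fin m)) (T : List (Finset (Fin m))) (j : ℕ) :
    partialCard m (U :: T) (j + 1) = U.card + partialCard m T j := by
  simp [partialCard]

lemma partialCard_mono {m : ℕ} (L : List (Finset (Fin m))) : Monotone (partialCard m L) := by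
  intro a b hab
  obtain ⟨c, rfl⟩ := Nat.exists_eq_add_of_le hab
  unfold partialCard
  rw [List.take_add, List.map_append, List.sum_append]
  exact Nat.le_add_right _ _

lemma flatMap_sort_length {m : ℕ} (L : List (Finset (Fin m))) :
    (L.flatMap fun U => U.sort (· ≤ ·)).length = (L.map Finset.card).sum := by
  rw [List.length_flatMap]
  induction L with
  | nil => simp
  | cons U T ih => simp_all [Function.comp]

lemma flatMap_sort_nodup {m : ℕ} {L : List (Finset (Fin m))} (hd : L.Pairwise Disjoint) :
    (L.flatMap fun U => U.sort (· ≤ ·)).Nodup := by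
  induction L with
  | nil => simp
  | cons U T ih =>
    rw [List.flatMap_cons]
    refine (Finset.sort_nodup _ _).append (ih hd.of_cons) ?_
    intro a haU haT
    rw [Finset.mem_sort] at haU
    rw [List.mem_flatMap] at haT
    obtain ⟨V, hV, haV⟩ := haT
    rw [Finset.mem_sort] at haV
    exact Finset.disjoint_left.mp (List.rel_of_pairwise_cons hd hV) haU haV

lemma getElem_flatMap_mem_iff {m : ℕ} (L : List (Finset (Fin m))) (hd : L.Pairwise Disjoint)
    (j k : ℕ) (hj : j < L.length) (hk : k < (L.flatMap fun U => U.sort (· ≤ ·)).length) :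
    ((L.flatMap fun U => U.sort (· ≤ ·))[k]'hk ∈ L[j]'hj) ↔
      partialCard m L j ≤ k ∧ k < partialCard m L (j + 1) := by
  induction L generalizing j k with
  | nil => simp at hj
  | cons U T ih =>
    rw [List.flatMap_cons] at hk
    have hUlen : (U.sort (· ≤ ·)).length = U.card := Finset.length_sort _
    have hk' : k < (U.sort (· ≤ ·)).length + (T.flatMap fun U => U.sort (· ≤ ·)).length := by
      simpa using hk
    have hgoal : ((U :: T).flatMap fun U => U.sort (· ≤ ·))[k]'hk
        = ((U.sort (· ≤ ·)) ++ T.flatMap fun U => U.sort (· ≤ ·))[k]'(by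
          simpa using hk) := by
      simp [List.flatMap_cons]
    cases j with
    | zero =>
      have h1 : partialCard m (U :: T) 1 = U.card := by simp [partialCard]
      rw [partialCard_zero, h1, hgoal]
      by_cases hkU : k < U.card
      · rw [List.getElem_append_left (by omega)]
        have hmem : (U.sort (· ≤ ·))[k]'(by omega) ∈ U :=
          (Finset.mem_sort _).mp (List.getElem_mem _)
        simp only [List.getElem_cons_zero]
        exact iff_of_true hmem ⟨Nat.zero_le _, hkU⟩
      · rw [List.getElem_append_right (by omega)]
        have hmem : ((T.flatMap fun U => U.sort (· ≤ ·))[k - (U.sort (· ≤ ·)).length]'(by omega))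
            ∈ T.flatMap fun U => U.sort (· ≤ ·) := List.getElem_mem _
        rw [List.mem_flatMap] at hmem
        obtain ⟨V, hV, haV⟩ := hmem
        rw [Finset.mem_sort] at haV
        have hnot : ((T.flatMap fun U => U.sort (· ≤ ·))[k - (U.sort (· ≤ ·)).length]'(by omega))
            ∉ U :=
          fun hin => Finset.disjoint_left.mp (List.rel_of_pairwise_cons hd hV) hin haV
        simp only [List.getElem_cons_zero]
        exact iff_of_false hnot (by omega)
    | succ j' =>
      have hj' : j' < T.length := by simpa using hj
      have hc1 : partialCard m (U :: T) (j' + 1) = U.card + partialCard m T j' :=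
        partialCard_cons_succ U T j'
      have hc2 : partialCard m (U :: T) (j' + 1 + 1) = U.card + partialCard m T (j' + 1) :=
        partialCard_cons_succ U T (j' + 1)
      rw [hc1, hc2, hgoal]
      simp only [List.getElem_cons_succ]
      by_cases hkU : k < U.card
      · rw [List.getElem_append_left (by omega)]
        have hmem : (U.sort (· ≤ ·))[k]'(by omega) ∈ U :=
          (Finset.mem_sort _).mp (List.getElem_mem _)
        have hdisj : Disjoint U (T[j']'hj') :=
          List.rel_of_pairwise_cons hd (List.getElem_mem _)
        exact iff_of_false (fun hin => Finset.disjoint_left.mp hdisj hmem hin) (by omega)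
      · rw [List.getElem_append_right (by omega)]
        have := ih hd.of_cons j' (k - (U.sort (· ≤ ·)).length) hj' (by omega)
        rw [this]
        omega

lemma get_disjoint {m : ℕ} {L : List (Finset (Fin m))} (hd : L.Pairwise Disjoint)
    {a b : Fin L.length} (hab : a ≠ b) : Disjoint (L.get a) (L.get b) := by
  rcases lt_or_gt_of_ne hab with h | h
  · exact List.pairwise_iff_get.mp hd a b h
  · exact (List.pairwise_iff_get.mp hd b a h).symm

lemma exists_compatible {m : ℕ} {L : List (Finset (Fin m))}
    (hL : IsOrderedPartition m L) : ∃ σ : Equiv.Perm (Fin m), Compatible m L σ := by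
  obtain ⟨hne, hd, hcov⟩ := hL
  have hlen : (L.flatMap fun U => U.sort (· ≤ ·)).length = m := by
    rw [flatMap_sort_length, sum_card_eq hd, hcov, Finset.card_univ, Fintype.card_fin]
  have hnd : (L.flatMap fun U => U.sort (· ≤ ·)).Nodup := flatMap_sort_nodup hd
  have hg : Function.Injective
      (fun k : Fin m => (L.flatMap fun U => U.sort (· ≤ ·)).get (Fin.cast hlen.symm k)) := by
    intro a b hab
    have := List.nodup_iff_injective_get.mp hnd hab
    exact Fin.cast_injective _ this
  have hbij := Finite.injective_iff_bijective.mp hg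
  refine ⟨(Equiv.ofBijective _ hbij).symm, ?_⟩
  intro j i
  have hki : (L.flatMap fun U => U.sort (· ≤ ·)).get
      (Fin.cast hlen.symm ((Equiv.ofBijective _ hbij).symm i)) = i :=
    Equiv.ofBijective_apply_symm_apply _ hbij i
  have hkm : (((Equiv.ofBijective _ hbij).symm i : Fin m) : ℕ)
      < (L.flatMap fun U => U.sort (· ≤ ·)).length := by
    have h := ((Equiv.ofBijective _ hbij).symm i).isLt
    omega
  conv_lhs => rw [← hki]
  simp only [List.get_eq_getElem, Fin.coe_cast]
  exact getElem_flatMap_mem_iff L hd j _ j.isLt hkm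

lemma compatible_mul_swap {m : ℕ} {L : List (Finset (Fin m))} (hd : L.Pairwise Disjoint)
    {j : Fin L.length} {i₁ i₂ : Fin m} (h1 : i₁ ∈ L.get j) (h2 : i₂ ∈ L.get j)
    {σ : Equiv.Perm (Fin m)} (hσ : Compatible m L σ) :
    Compatible m L (σ * Equiv.swap i₁ i₂) := by
  intro j' i
  have hmemiff : i₁ ∈ L.get j' ↔ i₂ ∈ L.get j' := by
    by_cases hjj : j' = j
    · subst hjj; exact iff_of_true h1 h2
    · have hdisj := get_disjoint hd hjj
      exact iff_of_false (fun h => Finset.disjoint_left.mp hdisj h h1)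
        (fun h => Finset.disjoint_left.mp hdisj h h2)
  simp only [Equiv.Perm.mul_apply]
  rcases eq_or_ne i i₁ with rfl | h1'
  · rw [Equiv.swap_apply_left, hmemiff]
    exact hσ j' i₂
  rcases eq_or_ne i i₂ with rfl | h2'
  · rw [Equiv.swap_apply_right, ← hmemiff]
    exact hσ j' i₁
  · rw [Equiv.swap_apply_of_ne_of_ne h1' h2']
    exact hσ j' i

lemma face_coord_lt {m : ℕ} {L : List (Finset (Fin m))}
    {i₁ i₂ : Fin m} {a b : Fin L.length} (h1 : i₁ ∈ L.get a) (h2 : i₂ ∈ L.get b)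
    (hab : (a : ℕ) < b) {x : Fin m → ℝ} (hx : x ∈ permFace m L) : x i₁ < x i₂ := by
  have hlin : IsLinearMap ℝ (fun y : Fin m → ℝ => y i₁ - y i₂) :=
    ⟨fun y z => by simp [Pi.add_apply]; ring,
     fun c y => by simp [Pi.smul_apply, smul_eq_mul]; ring⟩
  have hconv : Convex ℝ {y : Fin m → ℝ | y i₁ - y i₂ < 0} := convex_halfSpace_lt hlin 0
  have hsub : {p | ∃ σ : Equiv.Perm (Fin m), Compatible m L σ ∧ p = permVertex m σ}
      ⊆ {y : Fin m → ℝ | y i₁ - y i₂ < 0} := by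
    rintro p ⟨σ, hσ, rfl⟩
    have hA := (hσ a i₁).mp h1
    have hB := (hσ b i₂).mp h2
    have hmono : partialCard m L ((a : ℕ) + 1) ≤ partialCard m L (b : ℕ) :=
      partialCard_mono L (by omega)
    have hlt : (σ i₁ : ℕ) < (σ i₂ : ℕ) := by omega
    have hlt' : ((σ i₁ : ℕ) : ℝ) < ((σ i₂ : ℕ) : ℝ) := by exact_mod_cast hlt
    simp only [permVertex, Set.mem_setOf_eq]
    linarith
  rw [permFace] at hx
  have := convexHull_min hsub hconv hx
  simpa [sub_neg] using this

theorem stmt7 (m : ℕ) (hm : 1 ≤ m) (L : List (Finset (Fin m)))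
    (hL : IsOrderedPartition m L) (I : Finset (Fin m)) :
    (permFace m L ∩ diagSubspace m I).Nonempty ↔
      ∃ j : Fin L.length, I ⊆ L.get j := by
  have hd := hL.2.1
  have hcov := hL.2.2
  constructor
  · rintro ⟨x, hxF, hxD⟩
    by_contra hcon
    push_neg at hcon
    have hLpos : 0 < L.length := by
      rcases Nat.eq_zero_or_pos L.length with h0 | h
      · exfalso
        rw [List.length_eq_zero_iff] at h0
        subst h0
        have h1 := Finset.mem_univ (⟨0, hm⟩ : Fin m)
        rw [← hcov] at h1
        simp at h1
      · exact h
    -- get i₁ ∈ I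
    obtain ⟨i₁, hi₁I, -⟩ := Finset.not_subset.mp (hcon ⟨0, hLpos⟩)
    -- i₁ belongs to some block
    have hmem1 : ∃ U ∈ L, i₁ ∈ U := by
      rw [← mem_foldr_union (L := L)]
      rw [hcov]; exact Finset.mem_univ _
    obtain ⟨U, hUL, hi₁U⟩ := hmem1
    obtain ⟨a, ha⟩ := List.mem_iff_get.mp hUL
    have hi₁a : i₁ ∈ L.get a := ha ▸ hi₁U
    obtain ⟨i₂, hi₂I, hi₂a⟩ := Finset.not_subset.mp (hcon a)
    have hmem2 : ∃ V ∈ L, i₂ ∈ V := by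
      rw [← mem_foldr_union (L := L)]
      rw [hcov]; exact Finset.mem_univ _
    obtain ⟨V, hVL, hi₂V⟩ := hmem2
    obtain ⟨b, hb⟩ := List.mem_iff_get.mp hVL
    have hi₂b : i₂ ∈ L.get b := hb ▸ hi₂V
    have hne : a ≠ b := fun h => hi₂a (h ▸ hi₂b)
    have heq : x i₁ = x i₂ := hxD i₁ hi₁I i₂ hi₂I
    rcases lt_or_gt_of_ne (fun h : (a : ℕ) = (b : ℕ) => hne (Fin.ext h)) with h | h
    · have := face_coord_lt hi₁a hi₂b h hxF
      linarith
    · have := face_coord_lt hi₂b hi₁a h hxF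
      linarith
  · rintro ⟨j, hIj⟩
    obtain ⟨σ₀, hσ₀⟩ := exists_compatible hL
    classical
    set S : Finset (Equiv.Perm (Fin m)) := Finset.univ.filter (fun σ => Compatible m L σ)
      with hS
    have hσ₀S : σ₀ ∈ S := by simp [hS, hσ₀]
    have hSpos : (0 : ℝ) < ∑ _σ ∈ S, (1 : ℝ) := by
      rw [Finset.sum_const, nsmul_eq_mul, mul_one]
      exact_mod_cast Finset.card_pos.mpr ⟨σ₀, hσ₀S⟩
    refine ⟨S.centerMass (fun _ => (1 : ℝ)) (permVertex m), ?_, ?_⟩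
    · rw [permFace]
      exact Finset.centerMass_mem_convexHull S (fun _ _ => zero_le_one) hSpos
        (fun σ hσ => ⟨σ, (Finset.mem_filter.mp hσ).2, rfl⟩)
    · intro i₁ hi₁ i₂ hi₂
      have h1 : i₁ ∈ L.get j := hIj hi₁
      have h2 : i₂ ∈ L.get j := hIj hi₂
      have key : ∑ σ ∈ S, permVertex m σ i₁ = ∑ σ ∈ S, permVertex m σ i₂ := by
        refine Finset.sum_nbij' (fun σ => σ * Equiv.swap i₁ i₂)
          (fun σ => σ * Equiv.swap i₁ i₂) ?_ ?_ ?_ ?_ ?_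
        · intro σ hσ
          rw [hS, Finset.mem_filter] at hσ ⊢
          exact ⟨Finset.mem_univ _, compatible_mul_swap hd h1 h2 hσ.2⟩
        · intro σ hσ
          rw [hS, Finset.mem_filter] at hσ ⊢
          exact ⟨Finset.mem_univ _, compatible_mul_swap hd h1 h2 hσ.2⟩
        · intro σ _
          show σ * Equiv.swap i₁ i₂ * Equiv.swap i₁ i₂ = σ
          rw [mul_assoc, Equiv.swap_mul_self, mul_one]
        · intro σ _
          show σ * Equiv.swap i₁ i₂ * Equiv.swap i₁ i₂ = σ
          rw [mul_assoc, Equiv.swap_mul_self, mul_one]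
        · intro σ _
          simp only [permVertex, Equiv.Perm.mul_apply, Equiv.swap_apply_right]
      rw [Finset.centerMass]
      simp only [Pi.smul_apply, smul_eq_mul, Finset.sum_apply, one_smul]
      rw [key]
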